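/- Let M be a finite subset of a countable group G, let V be a finite-dimensional vector space over a field k, let S = L(V^M, V), and let s ∈ S^G be such that σ_s is post-surjective. Then there exists a finite subset E ⊆ G with the following property: for all x, y ∈ V^G such that y(g) = σ_s(x)(g) for every g ∈ G with g ≠ 1_G, there exists x' ∈ V^G with σ_s(x') = y and x'(g) = x(g) for every g ∈ G \ E. -/
import Mathlib


open scoped BigOperators

/-- The linear NUCA `σ_s : V^G → V^G` with memory `M ⊆ G` associated with the
configuration of local defining maps `s`, given in coefficient form:
`σ_s(x)(g) = ∑_{m ∈ M} s(g,m)(x(g·m))`. -/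
def nucaMap {k V G : Type*} [Field k] [AddCommGroup V] [Module k V] [Group G]
    (M : Finset G) (s : G → G → (V →ₗ[k] V)) (x : G → V) : G → V :=
  fun g => ∑ m ∈ M, s g m (x (g * m))

/-- Two configurations are asymptotic if they agree outside a finite set. -/
def Asymptotic {G A : Type*} (x y : G → A) : Prop :=
  Set.Finite {g : G | x g ≠ y g}

/-- A map `σ : V^G → V^G` is post-surjective if for all `x, y` with `y` asymptotic to
`σ(x)` there is `z` asymptotic to `x` with `σ(z) = y`. -/
def PostSurjective {G V : Type*} (σ : (G → V) → (G → V)) : Prop :=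
  ∀ x y : G → V, Asymptotic y (σ x) → ∃ z : G → V, Asymptotic z x ∧ σ z = y

private lemma nuca_add_sum {k V G : Type*} [Field k] [AddCommGroup V] [Module k V]
    [Group G] (M : Finset G) (s : G → G → (V →ₗ[k] V)) {ι : Type*} (T : Finset ι)
    (x : G → V) (c : ι → k) (z : ι → G → V) (g : G) :
    nucaMap M s (fun h => x h + ∑ i ∈ T, c i • z i h) g
      = nucaMap M s x g + ∑ i ∈ T, c i • nucaMap M s (z i) g := by
  simp only [nucaMap, map_add, map_sum, map_smul, Finset.sum_add_distrib,
    Finset.smul_sum]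
  rw [Finset.sum_comm]

/-- Weak uniform post-surjectivity: if `σ_s` is post-surjective, then there is a
finite `E ⊆ G` such that whenever `y` agrees with `σ_s(x)` away from `1_G`, some
`x'` agreeing with `x` outside `E` satisfies `σ_s(x') = y`. -/
theorem stmt14 {k V G : Type*} [Field k] [AddCommGroup V] [Module k V]
    [FiniteDimensional k V] [Group G] [Countable G]
    (M : Finset G) (s : G → G → (V →ₗ[k] V)) (hs : ∀ g, ∀ m ∉ M, s g m = 0)
    (hpost : PostSurjective (nucaMap M s)) :
    ∃ E : Finset G, ∀ x y : G → V,
      (∀ g : G, g ≠ 1 → y g = nucaMap M s x g) →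
      ∃ x' : G → V, nucaMap M s x' = y ∧ ∀ g ∉ E, x' g = x g := by
  classical
  set b := Module.finBasis k V with hb
  have hzero : nucaMap M s (fun _ => (0 : V)) = fun _ => (0 : V) := by
    funext g; simp [nucaMap]
  -- for each basis vector get a finitely supported preimage of the Dirac config
  have key : ∀ i, ∃ z : G → V, Asymptotic z (fun _ => 0) ∧
      nucaMap M s z = (fun g => if g = 1 then b i else 0) := by
    intro i
    apply hpost
    rw [hzero]
    exact Set.Finite.subset (Set.finite_singleton 1) (by
      intro g hg
      simp only [Set.mem_setOf_eq] at hg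
      by_contra h
      exact hg (if_neg h))
  choose z hzfin hz using key
  refine ⟨Finset.univ.biUnion fun i => (hzfin i).toFinset, ?_⟩
  intro x y hy
  set c := b.repr (y 1 - nucaMap M s x 1) with hc
  refine ⟨fun h => x h + ∑ i, c i • z i h, ?_, ?_⟩
  · funext g
    rw [nuca_add_sum]
    by_cases hg : g = 1
    · subst hg
      have := b.sum_repr (y 1 - nucaMap M s x 1)
      simp only [hz, if_pos]
      rw [this]; abel
    · simp only [hz, if_neg hg, smul_zero, Finset.sum_const_zero, add_zero]
      exact (hy g hg).symm
  · intro g hg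
    have : ∀ i, z i g = 0 := by
      intro i
      by_contra h
      exact hg (Finset.mem_biUnion.2 ⟨i, Finset.mem_univ i,
        (Set.Finite.mem_toFinset _).2 h⟩)
    simp [this]
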